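/- Let ξ_∞ ∈ ℝ and ξ_p ∈ ℚ_p, and let ε_∞, ε_p > 0 satisfy ε_∞ ≥ (1/2)·ε_p^{-1}·p. Then there exists a rational number r ∈ ℚ such that |r − ξ_∞|_∞ ≤ ε_∞, |r − ξ_p|_p ≤ ε_p, and |r|_q ≤ 1 for every prime q ≠ p. -/

import Mathlib

/-- (Strong approximation) Given `ξ_∞ ∈ ℝ`, `ξ_p ∈ ℚ_p` and
`ε_∞, ε_p > 0` with `ε_∞ ≥ (1/2)·ε_p⁻¹·p`, there is `r ∈ ℚ` with
`|r − ξ_∞| ≤ ε_∞`, `|r − ξ_p|_p ≤ ε_p`, and `|r|_q ≤ 1` for all primes `q ≠ p`. -/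
theorem strong_approximation (p : ℕ) [Fact p.Prime] (ξ_inf : ℝ) (ξ_p : ℚ_[p])
    (ε_inf ε_p : ℝ) (h_inf : 0 < ε_inf) (h_p : 0 < ε_p)
    (h : ε_inf ≥ (1 / 2) * ε_p⁻¹ * p) :
    ∃ r : ℚ, |(r : ℝ) - ξ_inf| ≤ ε_inf ∧ ‖(r : ℚ_[p]) - ξ_p‖ ≤ ε_p ∧
      ∀ q : ℕ, q.Prime → q ≠ p → padicNorm q r ≤ 1 := by
  have hp : p.Prime := Fact.out
  have hp1 : (1:ℝ) < p := by exact_mod_cast hp.one_lt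
  have hp0 : (0:ℝ) < p := lt_trans one_pos hp1
  -- choose m with ‖ξ_p‖ ≤ p^m
  obtain ⟨m, hm⟩ : ∃ m : ℕ, ‖ξ_p‖ ≤ (p:ℝ)^m := by
    obtain ⟨m, hm⟩ := exists_nat_gt ‖ξ_p‖
    refine ⟨m, hm.le.trans ?_⟩
    calc (m:ℝ) ≤ (2:ℝ)^m := by exact_mod_cast (Nat.lt_two_pow_self (n := m)).le
      _ ≤ (p:ℝ)^m := by
        apply pow_le_pow_left₀ (by norm_num)
        exact_mod_cast hp.two_le
  set n : ℤ := ⌈-Real.logb p ε_p⌉ with hn_def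
  have hn1 : (p:ℝ)^(-n) ≤ ε_p := by
    have h1 : ((-n : ℤ):ℝ) ≤ Real.logb p ε_p := by
      have := Int.le_ceil (-Real.logb p ε_p)
      push_cast
      push_cast at this
      linarith
    calc (p:ℝ)^(-n) = (p:ℝ)^(((-n:ℤ)):ℝ) := (Real.rpow_intCast _ _).symm
      _ ≤ (p:ℝ)^(Real.logb p ε_p) := Real.rpow_le_rpow_of_exponent_le hp1.le h1
      _ = ε_p := Real.rpow_logb hp0 (ne_of_gt hp1) h_p
  have hn2 : (p:ℝ)^n ≤ 2 * ε_inf := by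
    have h2 : ((n:ℤ):ℝ) ≤ -Real.logb p ε_p + 1 := by
      have := (Int.ceil_lt_add_one (-Real.logb p ε_p)).le
      exact_mod_cast this
    have h3 : (p:ℝ)^n ≤ (p:ℝ)^(-Real.logb p ε_p + 1) := by
      calc (p:ℝ)^n = (p:ℝ)^(((n:ℤ)):ℝ) := (Real.rpow_intCast _ _).symm
        _ ≤ _ := Real.rpow_le_rpow_of_exponent_le hp1.le h2
    have heq : (p:ℝ)^(-Real.logb p ε_p + 1) = ε_p⁻¹ * p := by
      rw [Real.rpow_add hp0, Real.rpow_one, Real.rpow_neg hp0.le,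
        Real.rpow_logb hp0 (ne_of_gt hp1) h_p]
    rw [heq] at h3
    linarith
  set n' : ℕ := n.toNat with hn'_def
  have hnn' : n ≤ (n' : ℤ) := Int.self_le_toNat n
  have hpQp : ((p:ℚ_[p])) ≠ 0 := Nat.cast_ne_zero.mpr hp.pos.ne'
  have hy : ‖ξ_p * (p:ℚ_[p])^m‖ ≤ 1 := by
    rw [norm_mul, Padic.norm_p_pow]
    have h1 : ((p:ℝ)^(-(m:ℤ))) = ((p:ℝ)^m)⁻¹ := by
      rw [zpow_neg, zpow_natCast]
    rw [h1]
    calc ‖ξ_p‖ * ((p:ℝ)^m)⁻¹ ≤ (p:ℝ)^m * ((p:ℝ)^m)⁻¹ := by gcongr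
      _ = 1 := mul_inv_cancel₀ (by positivity)
  set y : ℤ_[p] := ⟨ξ_p * (p:ℚ_[p])^m, hy⟩ with hy_def
  set a : ℕ := y.appr (n' + m) with ha_def
  have happr : ‖y - (a : ℤ_[p])‖ ≤ (p:ℝ)^(-((n'+m:ℕ):ℤ)) :=
    ((y - (a:ℤ_[p])).norm_le_pow_iff_mem_span_pow (n'+m)).mpr (y.appr_spec (n'+m))
  set s : ℚ := (a : ℚ) / (p:ℚ)^m with hs_def
  have hs : ‖(s:ℚ_[p]) - ξ_p‖ ≤ (p:ℝ)^(-(n':ℤ)) := by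
    have key : (s:ℚ_[p]) - ξ_p = ((a:ℚ_[p]) - ξ_p * (p:ℚ_[p])^m) / (p:ℚ_[p])^m := by
      rw [hs_def]
      push_cast
      field_simp
    rw [key, norm_div, Padic.norm_p_pow]
    have hnum : ‖(a:ℚ_[p]) - ξ_p * (p:ℚ_[p])^m‖ ≤ (p:ℝ)^(-((n'+m:ℕ):ℤ)) := by
      have : (a:ℚ_[p]) - ξ_p * (p:ℚ_[p])^m = -(((y - (a:ℤ_[p])) : ℤ_[p]) : ℚ_[p]) := by
        show (a:ℚ_[p]) - ξ_p * (p:ℚ_[p])^m = -(ξ_p * (p:ℚ_[p])^m - (a:ℚ_[p]))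
        ring
      rw [this, norm_neg, ← PadicInt.norm_def]
      exact happr
    calc ‖(a:ℚ_[p]) - ξ_p * (p:ℚ_[p])^m‖ / (p:ℝ)^(-(m:ℤ))
        ≤ (p:ℝ)^(-((n'+m:ℕ):ℤ)) / (p:ℝ)^(-(m:ℤ)) := by gcongr
      _ = (p:ℝ)^(-(n':ℤ)) := by
          rw [← zpow_sub₀ (ne_of_gt hp0)]
          congr 1
          push_cast
          ring
  set k : ℤ := round ((ξ_inf - (s:ℝ)) / (p:ℝ)^n) with hk_def
  refine ⟨s + (k:ℚ) * (p:ℚ)^n, ?_, ?_, ?_⟩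
  · -- real bound
    have hpn : (0:ℝ) < (p:ℝ)^n := zpow_pos hp0 n
    set x := (ξ_inf - (s:ℝ)) / (p:ℝ)^n with hx_def
    have h1 : |x - (k:ℝ)| ≤ 1/2 := abs_sub_round x
    have h2 : ((s + (k:ℚ) * (p:ℚ)^n : ℚ):ℝ) - ξ_inf = ((k:ℝ) - x) * (p:ℝ)^n := by
      rw [hx_def]
      push_cast
      field_simp
      ring
    rw [h2, abs_mul, abs_of_pos hpn, abs_sub_comm]
    calc |x - (k:ℝ)| * (p:ℝ)^n ≤ (1/2) * (2*ε_inf) :=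
        mul_le_mul h1 hn2 hpn.le (by norm_num)
      _ = ε_inf := by ring
  · -- p-adic bound
    have hcast : (((s + (k:ℚ) * (p:ℚ)^n : ℚ)):ℚ_[p]) - ξ_p
        = ((s:ℚ_[p]) - ξ_p) + (k:ℚ_[p]) * (p:ℚ_[p])^n := by
      push_cast
      ring
    rw [hcast]
    refine le_trans (Padic.nonarchimedean _ _) (max_le ?_ ?_)
    · refine hs.trans (le_trans ?_ hn1)
      exact zpow_le_zpow_right₀ hp1.le (by omega)
    · rw [norm_mul, Padic.norm_p_zpow]
      calc ‖((k:ℤ):ℚ_[p])‖ * (p:ℝ)^(-n) ≤ 1 * (p:ℝ)^(-n) := by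
            gcongr
            exact Padic.norm_int_le_one k
        _ ≤ ε_p := by rw [one_mul]; exact hn1
  · -- other primes
    intro q hq hqp
    haveI : Fact q.Prime := ⟨hq⟩
    have hq1 : padicNorm q ((p:ℚ)) = 1 := by
      have : ((p:ℚ)) = (((p:ℤ)):ℚ) := by push_cast; rfl
      rw [this, padicNorm.int_eq_one_iff]
      intro hdvd
      exact hqp ((Nat.prime_dvd_prime_iff_eq hq hp).mp (Int.ofNat_dvd.mp hdvd))
    have hpow : ∀ j : ℕ, padicNorm q ((p:ℚ)^j) = 1 := by
      intro j
      induction j with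
      | zero => simp [padicNorm.one]
      | succ j ih => rw [pow_succ, padicNorm.mul, ih, hq1, one_mul]
    have hinv : ∀ x : ℚ, padicNorm q x⁻¹ = (padicNorm q x)⁻¹ := fun x => by
      rw [← one_div, padicNorm.div, padicNorm.one, one_div]
    have hzpow : padicNorm q ((p:ℚ)^(n:ℤ)) = 1 := by
      rcases n with j | j
      · simpa using hpow j
      · rw [zpow_negSucc, hinv, hpow, inv_one]
    have h1 : padicNorm q s ≤ 1 := by
      rw [hs_def, padicNorm.div, hpow m]
      have : ((a:ℚ)) = (((a:ℤ)):ℚ) := by push_cast; rfl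
      rw [this]
      simpa using padicNorm.of_int (p := q) (a:ℤ)
    have h2 : padicNorm q ((k:ℚ) * (p:ℚ)^(n:ℤ)) ≤ 1 := by
      rw [padicNorm.mul, hzpow, mul_one]
      exact padicNorm.of_int (p := q) k
    calc padicNorm q (s + (k:ℚ) * (p:ℚ)^n)
        ≤ max (padicNorm q s) (padicNorm q ((k:ℚ) * (p:ℚ)^n)) := padicNorm.nonarchimedean
      _ ≤ 1 := max_le h1 h2
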